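/- For every integer n ≥ 1, as an identity of rational numbers, ∑_{i=−n}^{n} ∑_{j=−n}^{n} |j³ − i³| · C(2n, n+i) · C(2n, n+j) = (4n²(5n−2)/(4n−1)) · C(4n−1, 2n−1). -/

import Mathlib

open Finset

/-- Binomial coefficient `C(a, b)` with natural upper index and integer lower
index: it vanishes when `b < 0` (and also when `b > a`, via `Nat.choose`). -/
def zchoose (a : ℕ) (b : ℤ) : ℚ :=
  if 0 ≤ b then (a.choose b.toNat : ℚ) else 0

private lemma absorbQ (M k : ℕ) :
    ((k : ℚ) + 1) * (((M + 1).choose (k + 1) : ℕ) : ℚ)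
      = ((M : ℚ) + 1) * ((M.choose k : ℕ) : ℚ) := by
  have h := Nat.add_one_mul_choose_eq M k
  have h2 := congrArg (Nat.cast : ℕ → ℚ) h
  push_cast at h2
  linear_combination -h2

private lemma double_split (m : ℕ) (h : ℕ → ℕ → ℚ) :
    ∑ k ∈ range m, ∑ l ∈ range m, h k l
      = (∑ k ∈ range m, ∑ l ∈ range k, h k l)
        + (∑ k ∈ range m, ∑ l ∈ range k, h l k)
        + ∑ k ∈ range m, h k k := by
  induction m with
  | zero => simp
  | succ m ih =>
    simp only [sum_range_succ, sum_add_distrib]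
    rw [ih]; ring

private lemma cube_lt {x y : ℚ} (h : x < y) : x ^ 3 < y ^ 3 := by
  nlinarith [sq_nonneg (x + y), mul_pos (mul_pos (sub_pos.2 h) (sub_pos.2 h)) (sub_pos.2 h),
    mul_pos (sub_pos.2 h) (sub_pos.2 h)]

private lemma vdm (a b c : ℕ) :
    ∑ m ∈ range (c + 1), a.choose m * b.choose (c - m) = (a + b).choose c := by
  rw [Nat.add_choose_eq, Finset.Nat.sum_antidiagonal_eq_sum_range_succ_mk]

private lemma h1Q (n k : ℕ) (hn : 1 ≤ n) :
    (2 * (n : ℚ)) * (((2 * n - 1).choose k : ℕ) : ℚ)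
      = ((k : ℚ) + 1) * (((2 * n).choose (k + 1) : ℕ) : ℚ) := by
  obtain ⟨m, hm⟩ : ∃ m, 2 * n = m + 1 := ⟨2 * n - 1, by omega⟩
  have h1 : 2 * n - 1 = m := by omega
  have hmq : (m : ℚ) + 1 = 2 * (n : ℚ) := by
    have : ((2 * n : ℕ) : ℚ) = ((m + 1 : ℕ) : ℚ) := by rw [hm]
    push_cast at this; linarith
  rw [h1, hm, ← hmq]
  exact (absorbQ m k).symm

private lemma h2Q (n k : ℕ) (hn : 1 ≤ n) :
    (2 * (n : ℚ)) * (((2 * n - 1).choose (k + 1) : ℕ) : ℚ)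
      = (2 * (n : ℚ) - 1 - (k : ℚ)) * (((2 * n).choose (k + 1) : ℕ) : ℚ) := by
  obtain ⟨m, hm⟩ : ∃ m, 2 * n = m + 1 := ⟨2 * n - 1, by omega⟩
  have h1 : 2 * n - 1 = m := by omega
  have hmq : (m : ℚ) + 1 = 2 * (n : ℚ) := by
    have : ((2 * n : ℕ) : ℚ) = ((m + 1 : ℕ) : ℚ) := by rw [hm]
    push_cast at this; linarith
  have hp : (((m + 1).choose (k + 1) : ℕ) : ℚ)
      = ((m.choose k : ℕ) : ℚ) + ((m.choose (k + 1) : ℕ) : ℚ) := by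
    rw [Nat.choose_succ_succ]; push_cast; ring
  have ha := absorbQ m k
  rw [h1, hm, ← hmq]
  linear_combination ha - ((m : ℚ) + 1) * hp

private lemma Qlem (n : ℕ) (hn : 1 ≤ n) (k : ℕ) :
    ∑ j ∈ range (k + 1), ((j : ℚ) - n) ^ 3 * (((2 * n).choose j : ℕ) : ℚ)
      = -(n : ℚ) * ((k : ℚ) ^ 2 - (2 * (n : ℚ) - 1) * (k : ℚ) + (n : ℚ) ^ 2)
          * (((2 * n - 1).choose k : ℕ) : ℚ) := by
  induction k with
  | zero => simp; ring
  | succ k ih =>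
    rw [sum_range_succ, ih]
    have h1 := h1Q n k hn
    have h2 := h2Q n k hn
    have hne : (2 * (n : ℚ)) ≠ 0 := by
      have : (1 : ℚ) ≤ (n : ℚ) := by exact_mod_cast hn
      linarith
    apply mul_left_cancel₀ hne
    push_cast
    linear_combination (-(n : ℚ) * ((k : ℚ) ^ 2 - (2 * (n : ℚ) - 1) * (k : ℚ) + (n : ℚ) ^ 2)) * h1
      + ((n : ℚ) * (((k : ℚ) + 1) ^ 2 - (2 * (n : ℚ) - 1) * ((k : ℚ) + 1) + (n : ℚ) ^ 2)) * h2

private lemma sum_f_zero (n : ℕ) (hn : 1 ≤ n) :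
    ∑ j ∈ range (2 * n + 1), ((j : ℚ) - n) ^ 3 * (((2 * n).choose j : ℕ) : ℚ) = 0 := by
  rw [Qlem n hn (2 * n), Nat.choose_eq_zero_of_lt (by omega)]
  simp

private lemma diag_zero (n : ℕ) :
    ∑ k ∈ range (2 * n + 1),
      ((k : ℚ) - n) ^ 3 * (((2 * n).choose k : ℕ) : ℚ) * (((2 * n).choose k : ℕ) : ℚ) = 0 := by
  have h := Finset.sum_range_reflect
    (fun j => ((j : ℚ) - n) ^ 3 * (((2 * n).choose j : ℕ) : ℚ) * (((2 * n).choose j : ℕ) : ℚ))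
    (2 * n + 1)
  simp only [Nat.add_sub_cancel] at h
  have key : ∀ j ∈ range (2 * n + 1),
      (((2 * n - j : ℕ) : ℚ) - n) ^ 3 * (((2 * n).choose (2 * n - j) : ℕ) : ℚ)
          * (((2 * n).choose (2 * n - j) : ℕ) : ℚ)
      = -(((j : ℚ) - n) ^ 3 * (((2 * n).choose j : ℕ) : ℚ) * (((2 * n).choose j : ℕ) : ℚ)) := by
    intro j hj
    rw [mem_range] at hj
    have hle : j ≤ 2 * n := by omega
    rw [Nat.choose_symm hle, Nat.cast_sub hle]
    push_cast
    ring
  rw [sum_congr rfl key, Finset.sum_neg_distrib] at h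
  linarith

private lemma reduceLem (n : ℕ) (hn : 1 ≤ n) :
    (∑ i ∈ Finset.Icc (-(n : ℤ)) (n : ℤ), ∑ j ∈ Finset.Icc (-(n : ℤ)) (n : ℤ),
      ((|j ^ 3 - i ^ 3| : ℤ) : ℚ) *
        zchoose (2 * n) ((n : ℤ) + i) * zchoose (2 * n) ((n : ℤ) + j))
    = 4 * (n : ℚ) * ∑ m ∈ range (2 * n),
        ((m : ℚ) ^ 2 - (2 * (n : ℚ) - 1) * (m : ℚ) + (n : ℚ) ^ 2)
          * (((2 * n).choose (m + 1) : ℕ) : ℚ) * (((2 * n - 1).choose m : ℕ) : ℚ) := by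
  set f : ℕ → ℚ := fun j => ((j : ℚ) - n) ^ 3 with hf
  set a : ℕ → ℚ := fun k => (((2 * n).choose k : ℕ) : ℚ) with ha
  -- reindexing
  have hmap : Finset.Icc (-(n : ℤ)) (n : ℤ)
      = Finset.map ⟨fun k : ℕ => (k : ℤ) - n, show Function.Injective (fun k : ℕ => (k : ℤ) - n) from fun x y hxy => by simpa using hxy⟩ (range (2 * n + 1)) := by
    ext x
    simp only [Finset.mem_map, Finset.mem_range, Finset.mem_Icc, Function.Embedding.coeFn_mk]
    constructor
    · rintro ⟨h1, h2⟩; exact ⟨(x + n).toNat, by omega, by omega⟩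
    · rintro ⟨k, hk, rfl⟩; omega
  have hz : ∀ k : ℕ, zchoose (2 * n) ((n : ℤ) + ((k : ℤ) - n)) = a k := by
    intro k
    have h0 : (n : ℤ) + ((k : ℤ) - n) = (k : ℤ) := by ring
    rw [h0]
    simp [zchoose, ha]
  have step1 : (∑ i ∈ Finset.Icc (-(n : ℤ)) (n : ℤ), ∑ j ∈ Finset.Icc (-(n : ℤ)) (n : ℤ),
      ((|j ^ 3 - i ^ 3| : ℤ) : ℚ) *
        zchoose (2 * n) ((n : ℤ) + i) * zchoose (2 * n) ((n : ℤ) + j))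
      = ∑ k ∈ range (2 * n + 1), ∑ l ∈ range (2 * n + 1), |f l - f k| * a k * a l := by
    rw [hmap]
    simp only [Finset.sum_map, Function.Embedding.coeFn_mk]
    refine sum_congr rfl fun k _ => sum_congr rfl fun l _ => ?_
    rw [hz k, hz l]
    congr 1
    congr 1
    push_cast [hf]
    ring_nf
  rw [step1]
  -- split
  rw [double_split]
  have hdiag1 : ∑ k ∈ range (2 * n + 1), |f k - f k| * a k * a k = 0 := by
    simp
  have hlt : ∀ l k : ℕ, l < k → f l < f k := by
    intro l k h
    apply cube_lt
    have : (l : ℚ) < k := by exact_mod_cast h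
    linarith
  have hL1 : (∑ k ∈ range (2 * n + 1), ∑ l ∈ range k, |f l - f k| * a k * a l)
      = ∑ k ∈ range (2 * n + 1), ∑ l ∈ range k, (f k - f l) * a k * a l := by
    refine sum_congr rfl fun k _ => sum_congr rfl fun l hl => ?_
    rw [mem_range] at hl
    rw [abs_sub_comm, abs_of_pos (sub_pos.2 (hlt l k hl))]
  have hL2 : (∑ k ∈ range (2 * n + 1), ∑ l ∈ range k, |f k - f l| * a l * a k)
      = ∑ k ∈ range (2 * n + 1), ∑ l ∈ range k, (f k - f l) * a k * a l := by
    refine sum_congr rfl fun k _ => sum_congr rfl fun l hl => ?_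
    rw [mem_range] at hl
    rw [abs_of_pos (sub_pos.2 (hlt l k hl))]
    ring
  rw [hL1, hL2, hdiag1, add_zero]
  -- D and E
  set D : ℚ := ∑ k ∈ range (2 * n + 1), ∑ l ∈ range k, f k * a k * a l with hD
  set E : ℚ := ∑ k ∈ range (2 * n + 1), ∑ l ∈ range k, f l * a k * a l with hE
  have hM : (∑ k ∈ range (2 * n + 1), ∑ l ∈ range k, (f k - f l) * a k * a l) = D - E := by
    rw [hD, hE, ← Finset.sum_sub_distrib]
    refine sum_congr rfl fun k _ => ?_
    rw [← Finset.sum_sub_distrib]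
    exact sum_congr rfl fun l _ => by ring
  -- full sum is zero
  have hfull : (∑ k ∈ range (2 * n + 1), ∑ l ∈ range (2 * n + 1), f k * a k * a l) = 0 := by
    have : ∀ k ∈ range (2 * n + 1),
        (∑ l ∈ range (2 * n + 1), f k * a k * a l) = f k * a k * ∑ l ∈ range (2 * n + 1), a l :=
      fun k _ => (Finset.mul_sum _ _ _).symm
    rw [sum_congr rfl this, ← Finset.sum_mul, sum_f_zero n hn, zero_mul]
  have hsplit2 := double_split (2 * n + 1) (fun k l => f k * a k * a l)
  rw [hfull] at hsplit2
  have hswap : (∑ k ∈ range (2 * n + 1), ∑ l ∈ range k, f l * a l * a k) = E := by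
    rw [hE]
    exact sum_congr rfl fun k _ => sum_congr rfl fun l _ => by ring
  rw [hswap, diag_zero n, add_zero] at hsplit2
  -- hsplit2 : 0 = D + E
  have hDE : D = -E := by linarith
  -- evaluate E
  have hEval : E = -(n : ℚ) * ∑ m ∈ range (2 * n),
      ((m : ℚ) ^ 2 - (2 * (n : ℚ) - 1) * (m : ℚ) + (n : ℚ) ^ 2)
        * (((2 * n).choose (m + 1) : ℕ) : ℚ) * (((2 * n - 1).choose m : ℕ) : ℚ) := by
    have h1 : ∀ k ∈ range (2 * n + 1),
        (∑ l ∈ range k, f l * a k * a l) = a k * ∑ l ∈ range k, f l * a l := by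
      intro k _
      rw [Finset.mul_sum]
      exact sum_congr rfl fun l _ => by ring
    rw [hE, sum_congr rfl h1, Finset.sum_range_succ']
    simp only [Finset.range_zero, Finset.sum_empty, mul_zero, add_zero]
    rw [Finset.mul_sum]
    refine sum_congr rfl fun m _ => ?_
    rw [Qlem n hn m]
    ring
  rw [hM, hDE, hEval]
  ring

private lemma X0lem (p : ℕ) :
    ∑ m ∈ range (2 * p + 4), (2 * p + 3).choose m * (2 * p + 4).choose (m + 1)
      = (4 * p + 7).choose (2 * p + 3) := by
  have h := vdm (2 * p + 3) (2 * p + 4) (2 * p + 3)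
  rw [show 2 * p + 3 + (2 * p + 4) = 4 * p + 7 by omega] at h
  rw [show 2 * p + 3 + 1 = 2 * p + 4 by omega] at h
  rw [← h]
  refine sum_congr rfl fun m hm => ?_
  rw [mem_range] at hm
  congr 1
  rw [← Nat.choose_symm (show m + 1 ≤ 2 * p + 4 by omega)]
  congr 1
  omega

private lemma Blem (p : ℕ) :
    ∑ m ∈ range (2 * p + 4), (m : ℚ) * (((2 * p + 3).choose m : ℕ) : ℚ)
        * (((2 * p + 4).choose (m + 1) : ℕ) : ℚ)
      = (2 * (p : ℚ) + 3) * (((4 * p + 6).choose (2 * p + 2) : ℕ) : ℚ) := by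
  rw [show 2 * p + 4 = (2 * p + 3) + 1 by omega, Finset.sum_range_succ']
  simp only [Nat.cast_zero, zero_mul, add_zero]
  have hpt : ∀ i ∈ range (2 * p + 3),
      ((i + 1 : ℕ) : ℚ) * (((2 * p + 3).choose (i + 1) : ℕ) : ℚ)
          * (((2 * p + 4).choose (i + 1 + 1) : ℕ) : ℚ)
      = (2 * (p : ℚ) + 3) * ((((2 * p + 2).choose i : ℕ) : ℚ)
          * (((2 * p + 4).choose (i + 2) : ℕ) : ℚ)) := by
    intro i hi
    have ha := absorbQ (2 * p + 2) i
    rw [show 2 * p + 2 + 1 = 2 * p + 3 by omega] at ha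
    push_cast at ha ⊢
    rw [show i + 1 + 1 = i + 2 by omega]
    nlinarith [ha]
  rw [sum_congr rfl hpt, ← Finset.mul_sum]
  congr 1
  have h := vdm (2 * p + 2) (2 * p + 4) (2 * p + 2)
  rw [show 2 * p + 2 + (2 * p + 4) = 4 * p + 6 by omega] at h
  rw [show 2 * p + 2 + 1 = 2 * p + 3 by omega] at h
  rw [← h]
  push_cast
  refine sum_congr rfl fun s hs => ?_
  rw [mem_range] at hs
  congr 2
  rw [← Nat.choose_symm (show s + 2 ≤ 2 * p + 4 by omega)]
  congr 1
  omega

private lemma Alem (p : ℕ) :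
    ∑ m ∈ range (2 * p + 4), (m : ℚ) * ((m : ℚ) - 1) * (((2 * p + 3).choose m : ℕ) : ℚ)
        * (((2 * p + 4).choose (m + 1) : ℕ) : ℚ)
      = (2 * (p : ℚ) + 3) * (2 * (p : ℚ) + 2)
          * (((4 * p + 5).choose (2 * p + 1) : ℕ) : ℚ) := by
  rw [show 2 * p + 4 = (2 * p + 2) + 1 + 1 by omega, Finset.sum_range_succ',
    Finset.sum_range_succ']
  simp only [Nat.cast_zero, Nat.cast_one, zero_mul, add_zero, Nat.cast_add]
  have h0 : ((0 : ℕ) + 1 : ℚ) * (((0 : ℕ) + 1 : ℚ) - 1) = 0 := by norm_num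
  have hpt : ∀ s ∈ range (2 * p + 2),
      ((s : ℚ) + 1 + 1) * (((s : ℚ) + 1 + 1) - 1) * (((2 * p + 3).choose (s + 1 + 1) : ℕ) : ℚ)
          * (((2 * p + 4).choose (s + 1 + 1 + 1) : ℕ) : ℚ)
      = (2 * (p : ℚ) + 3) * (2 * (p : ℚ) + 2) * ((((2 * p + 1).choose s : ℕ) : ℚ)
          * (((2 * p + 4).choose (s + 3) : ℕ) : ℚ)) := by
    intro s hs
    have ha1 := absorbQ (2 * p + 2) (s + 1)
    rw [show 2 * p + 2 + 1 = 2 * p + 3 by omega] at ha1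
    have ha2 := absorbQ (2 * p + 1) s
    rw [show 2 * p + 1 + 1 = 2 * p + 2 by omega] at ha2
    rw [show s + 1 + 1 + 1 = s + 3 by omega, show s + 1 + 1 = s + 2 by omega]
    rw [show s + 1 + 1 = s + 2 by omega] at ha1
    push_cast at ha1 ha2 ⊢
    linear_combination ((s : ℚ) + 1) * (((2 * p + 4).choose (s + 3) : ℕ) : ℚ) * ha1
      + (2 * (p : ℚ) + 3) * (((2 * p + 4).choose (s + 3) : ℕ) : ℚ) * ha2
  rw [sum_congr rfl hpt, ← Finset.mul_sum]
  have h := vdm (2 * p + 1) (2 * p + 4) (2 * p + 1)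
  rw [show 2 * p + 1 + (2 * p + 4) = 4 * p + 5 by omega] at h
  rw [show 2 * p + 1 + 1 = 2 * p + 2 by omega] at h
  have h2 : (∑ i ∈ range (2 * p + 2),
      (((2 * p + 1).choose i : ℕ) : ℚ) * (((2 * p + 4).choose (i + 3) : ℕ) : ℚ))
      = (((4 * p + 5).choose (2 * p + 1) : ℕ) : ℚ) := by
    rw [← h]
    push_cast
    refine sum_congr rfl fun s hs => ?_
    rw [mem_range] at hs
    congr 2
    rw [← Nat.choose_symm (show s + 3 ≤ 2 * p + 4 by omega)]
    congr 1
    omega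
  rw [h2]
  norm_num

/-- Identity (6.1) of Krattenthaler–Schneider (conjectured as (5.7) by
Brent–Ohtsuka–Osborn–Prodinger). -/
theorem abs_cube_double_sum (n : ℕ) (hn : 1 ≤ n) :
    ∑ i ∈ Finset.Icc (-(n : ℤ)) (n : ℤ), ∑ j ∈ Finset.Icc (-(n : ℤ)) (n : ℤ),
      ((|j ^ 3 - i ^ 3| : ℤ) : ℚ) *
        zchoose (2 * n) ((n : ℤ) + i) * zchoose (2 * n) ((n : ℤ) + j)
    = (4 * (n : ℚ) ^ 2 * (5 * (n : ℚ) - 2) / (4 * (n : ℚ) - 1)) *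
        ((4 * n - 1).choose (2 * n - 1) : ℚ) := by
  rw [reduceLem n hn]
  rcases Nat.lt_or_ge n 2 with h2 | h2
  · have hn1 : n = 1 := by omega
    subst hn1
    norm_num [Finset.sum_range_succ, Nat.choose_one_right, Nat.choose_self]
  · obtain ⟨p, rfl⟩ : ∃ p, n = p + 2 := ⟨n - 2, by omega⟩
    simp only [show 2 * (p + 2) = 2 * p + 4 by omega, show 2 * p + 4 - 1 = 2 * p + 3 by omega,
      show 4 * (p + 2) - 1 = 4 * p + 7 by omega, show 2 * (p + 2) - 1 = 2 * p + 3 by omega]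
    have hX : (∑ m ∈ range (2 * p + 4),
        (((2 * p + 3).choose m : ℕ) : ℚ) * (((2 * p + 4).choose (m + 1) : ℕ) : ℚ))
        = (((4 * p + 7).choose (2 * p + 3) : ℕ) : ℚ) := by
      exact_mod_cast congrArg (Nat.cast : ℕ → ℚ) (X0lem p)
    have hs : (∑ m ∈ range (2 * p + 4),
        ((m : ℚ) ^ 2 - (2 * ((p : ℕ) + 2 : ℚ) - 1) * (m : ℚ) + ((p : ℕ) + 2 : ℚ) ^ 2)
          * (((2 * p + 4).choose (m + 1) : ℕ) : ℚ) * (((2 * p + 3).choose m : ℕ) : ℚ))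
        = (∑ m ∈ range (2 * p + 4), (m : ℚ) * ((m : ℚ) - 1) * (((2 * p + 3).choose m : ℕ) : ℚ)
            * (((2 * p + 4).choose (m + 1) : ℕ) : ℚ))
          - (2 * (p : ℚ) + 2) * (∑ m ∈ range (2 * p + 4), (m : ℚ)
              * (((2 * p + 3).choose m : ℕ) : ℚ) * (((2 * p + 4).choose (m + 1) : ℕ) : ℚ))
          + ((p : ℚ) + 2) ^ 2 * (∑ m ∈ range (2 * p + 4),
              (((2 * p + 3).choose m : ℕ) : ℚ) * (((2 * p + 4).choose (m + 1) : ℕ) : ℚ)) := by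
      rw [Finset.mul_sum, Finset.mul_sum, ← Finset.sum_sub_distrib, ← Finset.sum_add_distrib]
      refine sum_congr rfl fun m _ => ?_
      ring
    push_cast
    rw [hs, Alem p, Blem p, hX]
    have r1 : (4 * (p : ℚ) + 7) * (((4 * p + 6).choose (2 * p + 2) : ℕ) : ℚ)
        = (2 * (p : ℚ) + 3) * (((4 * p + 7).choose (2 * p + 3) : ℕ) : ℚ) := by
      have h := Nat.add_one_mul_choose_eq (4 * p + 6) (2 * p + 2)
      rw [show 4 * p + 6 + 1 = 4 * p + 7 by omega, show 2 * p + 2 + 1 = 2 * p + 3 by omega] at h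
      have h2 := congrArg (Nat.cast : ℕ → ℚ) h
      push_cast at h2
      linarith
    have r2 : (4 * (p : ℚ) + 6) * (((4 * p + 5).choose (2 * p + 1) : ℕ) : ℚ)
        = (2 * (p : ℚ) + 2) * (((4 * p + 6).choose (2 * p + 2) : ℕ) : ℚ) := by
      have h := Nat.add_one_mul_choose_eq (4 * p + 5) (2 * p + 1)
      rw [show 4 * p + 5 + 1 = 4 * p + 6 by omega, show 2 * p + 1 + 1 = 2 * p + 2 by omega] at h
      have h2 := congrArg (Nat.cast : ℕ → ℚ) h
      push_cast at h2
      linarith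
    have hp0 : (0 : ℚ) ≤ (p : ℚ) := Nat.cast_nonneg p
    rw [div_mul_eq_mul_div,
      eq_div_iff (show (4 * ((p : ℚ) + 2) - 1) ≠ 0 from ne_of_gt (by nlinarith))]
    linear_combination (-4 * ((p : ℚ) + 2) ^ 2 * (2 * (p : ℚ) + 2)) * r1
      + (2 * ((p : ℚ) + 2) * (2 * (p : ℚ) + 2) * (4 * (p : ℚ) + 7)) * r2
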